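/- The q-Fibonacci polynomials satisfy F_{m+2}(s,q) - F_{m+1}(s,q) = q^{m-1} s F_m(s,q) for all m ≥ 0, and more generally ∑_{k=0}^n (-1)^k q^{C(k,2)} [n choose k]_q F_{2n+m-k}(s,q) = q^{2C(n,2)+(m-1)n} s^n F_m(s,q) for all n ≥ 0 and m ≥ 0. -/

import Mathlib

noncomputable section

/-- The field ℚ(q) of rational functions, with q an indeterminate. -/
abbrev K : Type := RatFunc ℚ

/-- The indeterminate q. -/
def q : K := RatFunc.X

/-- The q-integer [n]_q. -/
def qint (n : ℕ) : K := ∑ i ∈ Finset.range n, q ^ i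

/-- The q-factorial. -/
def qfact : ℕ → K
  | 0 => 1
  | n + 1 => qint (n + 1) * qfact n

/-- The Gaussian binomial coefficient. -/
def qbinom (n k : ℕ) : K := qfact n / (qfact k * qfact (n - k))

/-- The (Carlitz) q-Fibonacci polynomials: F_0 = 0, F_1 = 1,
F_n(s,q) = F_{n-1}(s,q) + q^{n-3} s F_{n-2}(s,q). -/
def qFib : ℕ → Polynomial K
  | 0 => 0
  | 1 => 1
  | n + 2 => qFib (n + 1) + Polynomial.C (q ^ ((n : ℤ) - 1)) * Polynomial.X * qFib n

/-- The q-Fibonacci polynomials with q replaced by 1/q. -/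
def qFibInv : ℕ → Polynomial K
  | 0 => 0
  | 1 => 1
  | n + 2 => qFibInv (n + 1) + Polynomial.C (q ^ (1 - (n : ℤ))) * Polynomial.X * qFibInv n

lemma q_ne_zero : q ≠ 0 := RatFunc.X_ne_zero

lemma qint_ne_zero {n : ℕ} (h : n ≠ 0) : qint n ≠ 0 := by
  have h1 : qint n = algebraMap (Polynomial ℚ) K (∑ i ∈ Finset.range n, Polynomial.X ^ i) := by
    simp [qint, q, map_sum, map_pow, RatFunc.algebraMap_X]
  rw [h1]
  intro hc
  have h2 : (∑ i ∈ Finset.range n, (Polynomial.X : Polynomial ℚ) ^ i) = 0 :=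
    (map_eq_zero_iff _ (RatFunc.algebraMap_injective ℚ)).mp hc
  have h3 := congrArg (Polynomial.eval 0) h2
  simp [Polynomial.eval_finset_sum] at h3
  exact h h3

lemma qfact_ne_zero : ∀ n, qfact n ≠ 0
  | 0 => one_ne_zero
  | n + 1 => by
    rw [qfact]
    exact mul_ne_zero (qint_ne_zero (Nat.succ_ne_zero n)) (qfact_ne_zero n)

lemma qbinom_zero (n : ℕ) : qbinom n 0 = 1 := by
  simp [qbinom, qfact]
  exact qfact_ne_zero n

lemma qbinom_self (n : ℕ) : qbinom n n = 1 := by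
  simp [qbinom, qfact]
  exact qfact_ne_zero n

lemma qint_add (a b : ℕ) : qint (a + b) = qint a + q ^ a * qint b := by
  rw [qint, qint, qint, Finset.sum_range_add, Finset.mul_sum]
  congr 1
  exact Finset.sum_congr rfl fun i _ => by rw [pow_add]

lemma qbinom_pascal (n k : ℕ) (h : k + 1 ≤ n) :
    qbinom (n + 1) (k + 1) = qbinom n (k + 1) + q ^ (n - k) * qbinom n k := by
  have h1 : n + 1 - (k + 1) = n - k := by omega
  have h2 : n - (k + 1) + 1 = n - k := by omega
  have h3 : qint (n+1) = qint (n - k) + q ^ (n - k) * qint (k + 1) := by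
    rw [← qint_add]; congr 1; omega
  rw [qbinom, qbinom, qbinom, h1]
  rw [show qfact (n+1) = qint (n+1) * qfact n from rfl, h3]
  rw [show qfact (n - k) = qint (n - k) * qfact (n - (k+1)) by rw [← h2, qfact, h2]]
  rw [show qfact (k + 1) = qint (k+1) * qfact k from rfl]
  have c1 := qfact_ne_zero n
  have c2 := qfact_ne_zero k
  have c3 := qfact_ne_zero (n - (k+1))
  have c4 := qint_ne_zero (show k + 1 ≠ 0 by omega)
  have c5 := qint_ne_zero (show n - k ≠ 0 by omega)
  field_simp

lemma choose_succ_two (n : ℕ) : (n+1).choose 2 = n.choose 2 + n := by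
  simp [Nat.choose_succ_succ, Nat.choose_one_right]; omega

lemma qFib_step (m : ℕ) : qFib (m + 2) = qFib (m + 1) +
    Polynomial.C (q ^ ((m : ℤ) - 1)) * Polynomial.X * qFib m := rfl

lemma main : ∀ n m : ℕ,
    ∑ k ∈ Finset.range (n + 1),
        Polynomial.C ((-1 : K) ^ k * q ^ (k.choose 2) * qbinom n k) *
          qFib (2 * n + m - k) =
      Polynomial.C (q ^ (2 * (n.choose 2 : ℤ) + ((m : ℤ) - 1) * n)) *
        (Polynomial.X ^ n * qFib m) := by
  intro n
  induction n with
  | zero => intro m; simp [qbinom_zero]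
  | succ n ih =>
    intro m
    have key : (∑ k ∈ Finset.range (n + 1 + 1),
        Polynomial.C ((-1 : K) ^ k * q ^ (k.choose 2) * qbinom (n+1) k) *
          qFib (2 * (n+1) + m - k))
      = (∑ k ∈ Finset.range (n + 1),
        Polynomial.C ((-1 : K) ^ k * q ^ (k.choose 2) * qbinom n k) *
          qFib (2 * n + (m+2) - k))
        - Polynomial.C (q ^ n) * ∑ k ∈ Finset.range (n + 1),
        Polynomial.C ((-1 : K) ^ k * q ^ (k.choose 2) * qbinom n k) *
          qFib (2 * n + (m+1) - k) := by
      rw [Finset.sum_range_succ, Finset.sum_range_succ'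
        (fun k => Polynomial.C ((-1 : K) ^ k * q ^ (k.choose 2) * qbinom (n+1) k) *
          qFib (2 * (n+1) + m - k)) n]
      rw [Finset.sum_range_succ'
        (fun k => Polynomial.C ((-1 : K) ^ k * q ^ (k.choose 2) * qbinom n k) *
          qFib (2 * n + (m+2) - k)) n]
      rw [Finset.mul_sum, Finset.sum_range_succ]
      have e0 : Polynomial.C ((-1 : K) ^ 0 * q ^ (Nat.choose 0 2) * qbinom (n+1) 0) *
          qFib (2 * (n+1) + m - 0)
          = Polynomial.C ((-1 : K) ^ 0 * q ^ (Nat.choose 0 2) * qbinom n 0) *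
          qFib (2 * n + (m+2) - 0) := by
        rw [qbinom_zero, qbinom_zero, show 2 * n + (m+2) - 0 = 2 * (n+1) + m - 0 by omega]
      have e1 : Polynomial.C ((-1 : K) ^ (n+1) * q ^ ((n+1).choose 2) * qbinom (n+1) (n+1)) *
          qFib (2 * (n+1) + m - (n+1))
          = -(Polynomial.C (q ^ n) *
            (Polynomial.C ((-1 : K) ^ n * q ^ (n.choose 2) * qbinom n n) *
              qFib (2 * n + (m+1) - n))) := by
        rw [qbinom_self, qbinom_self,
          show 2 * (n+1) + m - (n+1) = 2 * n + (m+1) - n by omega]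
        have hc : ((-1:K) ^ (n+1) * q ^ ((n+1).choose 2) * 1)
            = -(q ^ n * ((-1:K) ^ n * q ^ (n.choose 2) * 1)) := by
          rw [choose_succ_two, pow_add, pow_succ]; ring
        rw [hc, map_neg, map_mul]
        ring
      have e2 : ∀ j ∈ Finset.range n,
          Polynomial.C ((-1 : K) ^ (j+1) * q ^ ((j+1).choose 2) * qbinom (n+1) (j+1)) *
            qFib (2 * (n+1) + m - (j+1))
          = Polynomial.C ((-1 : K) ^ (j+1) * q ^ ((j+1).choose 2) * qbinom n (j+1)) *
              qFib (2 * n + (m+2) - (j+1))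
            - Polynomial.C (q ^ n) *
              (Polynomial.C ((-1 : K) ^ j * q ^ (j.choose 2) * qbinom n j) *
                qFib (2 * n + (m+1) - j)) := by
        intro j hj
        have hjn : j + 1 ≤ n := Finset.mem_range.mp hj
        have hidx1 : 2 * (n+1) + m - (j+1) = 2 * n + (m+2) - (j+1) := by omega
        have hidx2 : 2 * (n+1) + m - (j+1) = 2 * n + (m+1) - j := by omega
        have hq : (-1 : K) ^ (j+1) * q ^ ((j+1).choose 2) * q ^ (n-j)
            = -(q ^ n * ((-1 : K) ^ j * q ^ (j.choose 2))) := by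
          rw [choose_succ_two, mul_assoc, ← pow_add]
          have hexp : j.choose 2 + j + (n - j) = j.choose 2 + n := by omega
          rw [hexp, pow_add, pow_succ]
          ring
        rw [qbinom_pascal n j hjn]
        have hcoef : (-1 : K) ^ (j+1) * q ^ ((j+1).choose 2) *
              (qbinom n (j+1) + q ^ (n-j) * qbinom n j)
            = (-1 : K) ^ (j+1) * q ^ ((j+1).choose 2) * qbinom n (j+1)
              + (-(q ^ n * ((-1 : K) ^ j * q ^ (j.choose 2)))) * qbinom n j := by
          rw [← hq]; ring
        rw [hcoef, map_add, add_mul,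
          show 2 * n + (m+2) - (j+1) = 2 * (n+1) + m - (j+1) from hidx1.symm,
          show 2 * n + (m+1) - j = 2 * (n+1) + m - (j+1) from hidx2.symm]
        simp only [neg_mul, map_neg, map_mul]
        ring
      rw [Finset.sum_congr rfl e2, Finset.sum_sub_distrib, e0, e1]
      ring
    rw [key, ih (m+2), ih (m+1)]
    have hcast2 : ((m + 2 : ℕ) : ℤ) = (m : ℤ) + 2 := by push_cast; ring
    have hcast1 : ((m + 1 : ℕ) : ℤ) = (m : ℤ) + 1 := by push_cast; ring
    rw [hcast2, hcast1, qFib_step m]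
    have hcc : (((n+1).choose 2 : ℕ) : ℤ) = (n.choose 2 : ℤ) + n := by
      rw [choose_succ_two]; push_cast; ring
    have hz1 : Polynomial.C (q ^ n) *
        Polynomial.C (q ^ (2 * (n.choose 2 : ℤ) + ((m : ℤ) + 1 - 1) * n))
        = Polynomial.C (q ^ (2 * (n.choose 2 : ℤ) + ((m : ℤ) + 2 - 1) * n)) := by
      rw [← Polynomial.C_mul, ← zpow_natCast q n, ← zpow_add₀ q_ne_zero]
      congr 2
      ring
    have hz2 : Polynomial.C (q ^ (2 * (n.choose 2 : ℤ) + ((m : ℤ) + 2 - 1) * n)) *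
        Polynomial.C (q ^ ((m : ℤ) - 1))
        = Polynomial.C (q ^ (2 * (((n+1).choose 2 : ℕ) : ℤ) + ((m : ℤ) - 1) * (n+1))) := by
      rw [← Polynomial.C_mul, ← zpow_add₀ q_ne_zero, hcc]
      congr 2
      push_cast
      ring
    calc Polynomial.C (q ^ (2 * (n.choose 2 : ℤ) + ((m:ℤ) + 2 - 1) * n)) *
          (Polynomial.X ^ n * (qFib (m+1) + Polynomial.C (q ^ ((m:ℤ) - 1)) * Polynomial.X * qFib m))
        - Polynomial.C (q ^ n) *
          (Polynomial.C (q ^ (2 * (n.choose 2 : ℤ) + ((m:ℤ) + 1 - 1) * n)) *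
            (Polynomial.X ^ n * qFib (m+1)))
        = (Polynomial.C (q ^ (2 * (n.choose 2 : ℤ) + ((m:ℤ) + 2 - 1) * n))
            - Polynomial.C (q ^ n) * Polynomial.C (q ^ (2 * (n.choose 2 : ℤ) + ((m:ℤ) + 1 - 1) * n)))
            * (Polynomial.X ^ n * qFib (m+1))
          + (Polynomial.C (q ^ (2 * (n.choose 2 : ℤ) + ((m:ℤ) + 2 - 1) * n)) *
              Polynomial.C (q ^ ((m:ℤ) - 1))) * (Polynomial.X ^ (n+1) * qFib m) := by
          ring
      _ = Polynomial.C (q ^ (2 * (((n+1).choose 2 : ℕ) : ℤ) + ((m:ℤ) - 1) * (n+1))) *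
            (Polynomial.X ^ (n+1) * qFib m) := by
          rw [hz1, hz2]
          push_cast
          ring

theorem stmt15 :
    (∀ m : ℕ, qFib (m + 2) - qFib (m + 1) =
      Polynomial.C (q ^ ((m : ℤ) - 1)) * Polynomial.X * qFib m) ∧
    (∀ n m : ℕ,
      ∑ k ∈ Finset.range (n + 1),
        Polynomial.C ((-1 : K) ^ k * q ^ (k.choose 2) * qbinom n k) *
          qFib (2 * n + m - k) =
      Polynomial.C (q ^ (2 * (n.choose 2 : ℤ) + ((m : ℤ) - 1) * n)) *
        (Polynomial.X ^ n * qFib m)) := by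
  exact ⟨fun m => by rw [qFib_step m]; ring, main⟩

end
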